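/- Let γ, E₁, E₂, x ∈ ℝ³ and let c > 0 be a real number satisfying the equal travel-time condition c‖x−γ‖ + ‖c(x−γ) + γ − E₁‖ = ‖x−γ‖ + ‖x−E₂‖. Then 2c·(⟨x−γ, γ−E₁⟩ + ‖x−γ‖(‖x−γ‖+‖x−E₂‖)) = (‖x−γ‖+‖x−E₂‖)² − ‖γ−E₁‖²; in particular, if the denominator D := ⟨x−γ, γ−E₁⟩ + ‖x−γ‖(‖x−γ‖+‖x−E₂‖) is nonzero, then c = N/(2D) with N := (‖x−γ‖+‖x−E₂‖)² − ‖γ−E₁‖². -/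

import Mathlib

theorem stmt_3 (γ E₁ E₂ x : EuclideanSpace ℝ (Fin 3)) (c : ℝ) (hc : 0 < c)
    (h : c * ‖x - γ‖ + ‖c • (x - γ) + γ - E₁‖ = ‖x - γ‖ + ‖x - E₂‖) :
    2 * c * ((inner ℝ (x - γ) (γ - E₁) : ℝ) + ‖x - γ‖ * (‖x - γ‖ + ‖x - E₂‖)) =
      (‖x - γ‖ + ‖x - E₂‖) ^ 2 - ‖γ - E₁‖ ^ 2 ∧
    ((inner ℝ (x - γ) (γ - E₁) : ℝ) + ‖x - γ‖ * (‖x - γ‖ + ‖x - E₂‖) ≠ 0 →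
      c = ((‖x - γ‖ + ‖x - E₂‖) ^ 2 - ‖γ - E₁‖ ^ 2) /
        (2 * ((inner ℝ (x - γ) (γ - E₁) : ℝ) + ‖x - γ‖ * (‖x - γ‖ + ‖x - E₂‖)))) := by
  have hre : c • (x - γ) + γ - E₁ = c • (x - γ) + (γ - E₁) := by abel
  have hnorm : ‖c • (x - γ) + γ - E₁‖ = (‖x - γ‖ + ‖x - E₂‖) - c * ‖x - γ‖ := by
    linarith
  have hsq : ‖c • (x - γ) + γ - E₁‖ ^ 2
      = ‖c • (x - γ)‖ ^ 2 + 2 * (inner ℝ (c • (x - γ)) (γ - E₁) : ℝ) + ‖γ - E₁‖ ^ 2 := by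
    rw [hre]
    exact norm_add_sq_real _ _
  have hi : (inner ℝ (c • (x - γ)) (γ - E₁) : ℝ) = c * (inner ℝ (x - γ) (γ - E₁) : ℝ) :=
    real_inner_smul_left _ _ _
  have hns : ‖c • (x - γ)‖ = c * ‖x - γ‖ := by
    rw [norm_smul, Real.norm_eq_abs, abs_of_pos hc]
  rw [hnorm, hi, hns] at hsq
  have hmain : 2 * c * ((inner ℝ (x - γ) (γ - E₁) : ℝ) + ‖x - γ‖ * (‖x - γ‖ + ‖x - E₂‖)) =
      (‖x - γ‖ + ‖x - E₂‖) ^ 2 - ‖γ - E₁‖ ^ 2 := by nlinarith [hsq]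
  refine ⟨hmain, fun hD => ?_⟩
  rw [eq_div_iff (mul_ne_zero two_ne_zero hD)]
  linarith [hmain]
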